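/- Let ν be a σ-finite measure on ℝ \ {0} satisfying ∫ min(1, |z|²) ν(dz) < ∞ and ∫ log(1+|z|) ν(dz) < ∞, and let σ ∈ ℝ. Then lim_{|x|→∞} ∫ (σ²z² + 2σxz)/((1+x²)(1+(x+σz)²)) ν(dz) = 0. -/

import Mathlib

open Real Filter MeasureTheory

lemma log_two_aux {t : ℝ} (ht0 : 0 ≤ t) (ht1 : t ≤ 1) :
    t * Real.log 2 ≤ Real.log (1 + t) := by
  rw [Real.le_log_iff_exp_le (by linarith)]
  have h := convexOn_exp.2 (Set.mem_univ (0:ℝ)) (Set.mem_univ (Real.log 2))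
    (by linarith : (0:ℝ) ≤ 1 - t) ht0 (by ring)
  simp only [smul_eq_mul, mul_zero, zero_add, Real.exp_zero, mul_one,
    Real.exp_log two_pos] at h
  linarith

lemma bound_integrable (ν : Measure ℝ)
    (hν1 : Integrable (fun z => min 1 (z ^ 2)) ν)
    (hν2 : Integrable (fun z => Real.log (1 + |z|)) ν) (σ : ℝ) :
    Integrable (fun z => min 1 (σ ^ 2 * z ^ 2 + |σ| * |z|)) ν := by
  have hmin : ∀ z : ℝ, 0 ≤ min 1 (z ^ 2) := fun z => le_min one_pos.le (sq_nonneg z)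
  have hlog : ∀ z : ℝ, 0 ≤ Real.log (1 + |z|) := fun z =>
    Real.log_nonneg (by simpa using abs_nonneg z)
  have hg : Integrable (fun z => (σ ^ 2 + 1) * min 1 (z ^ 2)
      + (|σ| / Real.log 2) * Real.log (1 + |z|)) ν :=
    (hν1.const_mul _).add (hν2.const_mul _)
  refine hg.mono' ?_ ?_
  · exact ((measurable_const.min ((measurable_id.pow_const 2).const_mul _|>.add
      ((measurable_id.abs).const_mul _)))).aestronglyMeasurable
  · filter_upwards with z
    have h2 : (0:ℝ) < Real.log 2 := Real.log_pos one_lt_two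
    have hb0 : 0 ≤ min 1 (σ ^ 2 * z ^ 2 + |σ| * |z|) :=
      le_min one_pos.le (by positivity)
    rw [Real.norm_eq_abs, abs_of_nonneg hb0]
    rcases le_or_gt |z| 1 with hz | hz
    · have hz2 : z ^ 2 ≤ 1 := by
        have := abs_nonneg z
        nlinarith [sq_abs z]
      have hm : min 1 (z ^ 2) = z ^ 2 := min_eq_right hz2
      have h1 : σ ^ 2 * z ^ 2 ≤ (σ ^ 2 + 1) * min 1 (z ^ 2) := by
        rw [hm]; nlinarith [sq_nonneg z]
      have h2' : |σ| * |z| ≤ (|σ| / Real.log 2) * Real.log (1 + |z|) := by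
        have := log_two_aux (abs_nonneg z) hz
        rw [div_mul_eq_mul_div, le_div_iff₀ h2]
        nlinarith [abs_nonneg σ]
      calc min 1 (σ ^ 2 * z ^ 2 + |σ| * |z|) ≤ σ ^ 2 * z ^ 2 + |σ| * |z| :=
            min_le_right _ _
        _ ≤ _ := add_le_add h1 h2'
    · have hm : min 1 (z ^ 2) = 1 := min_eq_left (by nlinarith [sq_abs z])
      calc min 1 (σ ^ 2 * z ^ 2 + |σ| * |z|) ≤ 1 := min_le_left _ _
        _ ≤ (σ ^ 2 + 1) * min 1 (z ^ 2) := by rw [hm]; nlinarith [sq_nonneg σ]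
        _ ≤ _ := le_add_of_nonneg_right (mul_nonneg (div_nonneg (abs_nonneg σ) (Real.log_nonneg one_le_two)) (hlog z))

lemma key_aux (ν : Measure ℝ) [SigmaFinite ν]
    (hν1 : Integrable (fun z => min 1 (z ^ 2)) ν)
    (hν2 : Integrable (fun z => Real.log (1 + |z|)) ν)
    (σ : ℝ) {l : Filter ℝ} [l.NeBot] [l.IsCountablyGenerated] (hl : Tendsto (fun x => |x|) l atTop) :
    Tendsto (fun x => ∫ z, (σ ^ 2 * z ^ 2 + 2 * σ * x * z) /
        ((1 + x ^ 2) * (1 + (x + σ * z) ^ 2)) ∂ν) l (nhds 0) := by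
  have h0 : (0:ℝ) = ∫ (z:ℝ), (0:ℝ) ∂ν := by simp
  rw [h0]
  apply tendsto_integral_filter_of_dominated_convergence
    (fun z => min 1 (σ ^ 2 * z ^ 2 + |σ| * |z|))
  · filter_upwards with x
    apply Continuous.aestronglyMeasurable
    apply Continuous.div (by continuity) (by continuity)
    intro z
    have h1 : (0:ℝ) < 1 + x ^ 2 := by positivity
    have h2 : (0:ℝ) < 1 + (x + σ * z) ^ 2 := by positivity
    positivity
  · filter_upwards with x
    filter_upwards with z
    have h1 : (0:ℝ) < 1 + x ^ 2 := by positivity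
    have h2 : (0:ℝ) < 1 + (x + σ * z) ^ 2 := by positivity
    rw [Real.norm_eq_abs]
    refine le_min ?_ ?_
    · have heq : (σ ^ 2 * z ^ 2 + 2 * σ * x * z) /
          ((1 + x ^ 2) * (1 + (x + σ * z) ^ 2))
          = 1 / (1 + x ^ 2) - 1 / (1 + (x + σ * z) ^ 2) := by
        field_simp
        ring
      rw [heq, abs_sub_le_iff]
      constructor
      · have : (0:ℝ) < 1 / (1 + (x + σ * z) ^ 2) := by positivity
        have : 1 / (1 + x ^ 2) ≤ 1 := by
          rw [div_le_one h1]; nlinarith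
        linarith
      · have : (0:ℝ) < 1 / (1 + x ^ 2) := by positivity
        have : 1 / (1 + (x + σ * z) ^ 2) ≤ 1 := by
          rw [div_le_one h2]; nlinarith
        linarith
    · rw [abs_div, abs_of_pos (mul_pos h1 h2)]
      rw [div_le_iff₀ (mul_pos h1 h2)]
      have hnum : |σ ^ 2 * z ^ 2 + 2 * σ * x * z| ≤
          σ ^ 2 * z ^ 2 + |σ| * |z| * (1 + x ^ 2) := by
        have h2x : 2 * |x| ≤ 1 + x ^ 2 := by nlinarith [sq_abs x, sq_nonneg (|x| - 1)]
        have : |2 * σ * x * z| ≤ |σ| * |z| * (1 + x ^ 2) := by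
          have : |2 * σ * x * z| = |σ| * |z| * (2 * |x|) := by
            rw [abs_mul, abs_mul, abs_mul]; simp [abs_two]; ring
          rw [this]
          exact mul_le_mul_of_nonneg_left h2x (by positivity)
        calc |σ ^ 2 * z ^ 2 + 2 * σ * x * z| ≤ |σ ^ 2 * z ^ 2| + |2 * σ * x * z| :=
              abs_add_le _ _
          _ ≤ σ ^ 2 * z ^ 2 + |σ| * |z| * (1 + x ^ 2) := by
              rw [abs_of_nonneg (by positivity : (0:ℝ) ≤ σ ^ 2 * z ^ 2)]
              linarith
      calc |σ ^ 2 * z ^ 2 + 2 * σ * x * z|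
          ≤ σ ^ 2 * z ^ 2 + |σ| * |z| * (1 + x ^ 2) := hnum
        _ ≤ (σ ^ 2 * z ^ 2 + |σ| * |z|) * ((1 + x ^ 2) * (1 + (x + σ * z) ^ 2)) := by
            nlinarith [abs_nonneg σ, abs_nonneg z, sq_nonneg σ, sq_nonneg z,
              mul_nonneg (abs_nonneg σ) (abs_nonneg z), sq_nonneg x,
              sq_nonneg (x + σ * z), mul_nonneg (mul_nonneg (sq_nonneg σ) (sq_nonneg z)) (sq_nonneg (x+σ*z)),
              mul_nonneg (mul_nonneg (mul_nonneg (abs_nonneg σ) (abs_nonneg z)) (sq_nonneg x)) (sq_nonneg (x+σ*z)),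
              mul_nonneg (mul_nonneg (abs_nonneg σ) (abs_nonneg z)) (sq_nonneg (x+σ*z)),
              mul_nonneg (mul_nonneg (sq_nonneg σ) (sq_nonneg z)) (sq_nonneg x)]
  · exact bound_integrable ν hν1 hν2 σ
  · filter_upwards with z
    have heq : ∀ x : ℝ, (σ ^ 2 * z ^ 2 + 2 * σ * x * z) /
        ((1 + x ^ 2) * (1 + (x + σ * z) ^ 2))
        = 1 / (1 + x ^ 2) - 1 / (1 + (x + σ * z) ^ 2) := by
      intro x
      have h1 : (0:ℝ) < 1 + x ^ 2 := by positivity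
      have h2 : (0:ℝ) < 1 + (x + σ * z) ^ 2 := by positivity
      field_simp
      ring
    simp only [heq]
    have hsq : Tendsto (fun x : ℝ => 1 + x ^ 2) l atTop := by
      apply tendsto_atTop_add_const_left
      have : Tendsto (fun x : ℝ => |x| ^ 2) l atTop :=
        (tendsto_pow_atTop two_ne_zero).comp hl
      simpa [sq_abs] using this
    have hsq2 : Tendsto (fun x : ℝ => 1 + (x + σ * z) ^ 2) l atTop := by
      apply tendsto_atTop_add_const_left
      have habs : Tendsto (fun x : ℝ => |x + σ * z|) l atTop := by
        have : Tendsto (fun x : ℝ => |x| - |σ * z|) l atTop :=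
          tendsto_atTop_add_const_right _ _ hl
        apply tendsto_atTop_mono _ this
        intro x
        have := abs_sub_abs_le_abs_sub x (-(σ * z))
        simp only [sub_neg_eq_add, abs_neg] at this
        linarith
      have : Tendsto (fun x : ℝ => |x + σ * z| ^ 2) l atTop :=
        (tendsto_pow_atTop two_ne_zero).comp habs
      simpa [sq_abs] using this
    have t1 : Tendsto (fun x : ℝ => 1 / (1 + x ^ 2)) l (nhds 0) := by
      simpa [Pi.inv_def] using hsq.inv_tendsto_atTop
    have t2 : Tendsto (fun x : ℝ => 1 / (1 + (x + σ * z) ^ 2)) l (nhds 0) := by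
      simpa [Pi.inv_def] using hsq2.inv_tendsto_atTop
    simpa using t1.sub t2

theorem jump_integral_tendsto_zero (ν : Measure ℝ) [SigmaFinite ν]
    (hν0 : ν {0} = 0)
    (hν1 : Integrable (fun z => min 1 (z ^ 2)) ν)
    (hν2 : Integrable (fun z => Real.log (1 + |z|)) ν)
    (σ : ℝ) :
    Tendsto (fun x => ∫ z, (σ ^ 2 * z ^ 2 + 2 * σ * x * z) /
        ((1 + x ^ 2) * (1 + (x + σ * z) ^ 2)) ∂ν) atTop (nhds 0) ∧
    Tendsto (fun x => ∫ z, (σ ^ 2 * z ^ 2 + 2 * σ * x * z) /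
        ((1 + x ^ 2) * (1 + (x + σ * z) ^ 2)) ∂ν) atBot (nhds 0) := by
  exact ⟨key_aux ν hν1 hν2 σ tendsto_abs_atTop_atTop,
    key_aux ν hν1 hν2 σ tendsto_abs_atBot_atTop⟩
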